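/- Let d ≥ 2 be an integer, θ ∈ (0,1) with d·θ > 1, and h_c > 0 such that ψ(x) = -h_c + d·arctanh(θ·tanh x) has exactly two fixed points b⁻ < b⁺. Then ψ'(b⁺) = 1 (b⁺ is a saddle-node fixed point), ψ''(b⁺) < 0, and ψ'(b⁻) < 1. -/

import Mathlib

/-- The inverse hyperbolic tangent, `arctanh x = (1/2)·log((1+x)/(1-x))`. -/
noncomputable def arctanh (x : ℝ) : ℝ := (1 / 2) * Real.log ((1 + x) / (1 - x))

lemma tanh_lt_one (x : ℝ) : Real.tanh x < 1 := by
  rw [Real.tanh_eq_sinh_div_cosh, div_lt_one (Real.cosh_pos x)]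
  nlinarith [Real.cosh_sub_sinh x, Real.exp_pos (-x)]

lemma neg_one_lt_tanh (x : ℝ) : -1 < Real.tanh x := by
  rw [Real.tanh_eq_sinh_div_cosh, lt_div_iff₀ (Real.cosh_pos x)]
  nlinarith [Real.cosh_add_sinh x, Real.exp_pos x]

lemma hasDerivAt_tanh (x : ℝ) : HasDerivAt Real.tanh (1 - Real.tanh x ^ 2) x := by
  have h := (Real.hasDerivAt_sinh x).div (Real.hasDerivAt_cosh x) (Real.cosh_pos x).ne'
  have he : Real.tanh = fun x => Real.sinh x / Real.cosh x := by
    funext y; exact Real.tanh_eq_sinh_div_cosh y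
  rw [he]
  refine h.congr_deriv (Eq.symm ?_)
  show 1 - (Real.sinh x / Real.cosh x) ^ 2 = _
  have h2 := Real.cosh_sq_sub_sinh_sq x
  have h3 := (Real.cosh_pos x).ne'
  field_simp

lemma tanh_strictMono : StrictMono Real.tanh := by
  apply strictMono_of_deriv_pos
  intro x
  rw [(hasDerivAt_tanh x).deriv]
  nlinarith [tanh_lt_one x, neg_one_lt_tanh x]

lemma arctanh_zero : arctanh 0 = 0 := by simp [arctanh]

lemma arctanh_neg (x : ℝ) : arctanh (-x) = - arctanh x := by
  unfold arctanh
  have h : (1 + -x) / (1 - -x) = ((1 + x) / (1 - x))⁻¹ := by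
    rw [inv_div]; ring_nf
  rw [h, Real.log_inv]; ring

lemma arctanh_strictMonoOn : StrictMonoOn arctanh (Set.Ioo (-1 : ℝ) 1) := by
  intro u hu v hv huv
  unfold arctanh
  have h1 : (0:ℝ) < 1 - u := by linarith [hu.2]
  have h2 : (0:ℝ) < 1 - v := by linarith [hv.2]
  have h3 : (0:ℝ) < 1 + u := by linarith [hu.1]
  have h4 : (0:ℝ) < 1 + v := by linarith [hv.1]
  have : (1 + u) / (1 - u) < (1 + v) / (1 - v) := by
    rw [div_lt_div_iff₀ h1 h2]; nlinarith
  have := Real.log_lt_log (by positivity) this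
  linarith

lemma hasDerivAt_arctanh {u : ℝ} (h1 : -1 < u) (h2 : u < 1) :
    HasDerivAt arctanh (1 / (1 - u ^ 2)) u := by
  have hne1 : (1:ℝ) + u > 0 := by linarith
  have hne2 : (1:ℝ) - u > 0 := by linarith
  have hd1 : HasDerivAt (fun x : ℝ => Real.log (1 + x)) (1 / (1 + u)) u := by
    have := (Real.hasDerivAt_log hne1.ne').comp u ((hasDerivAt_id u).const_add 1)
    simpa [Function.comp_def] using this
  have hd2 : HasDerivAt (fun x : ℝ => Real.log (1 - x)) (-(1 / (1 - u))) u := by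
    have := (Real.hasDerivAt_log hne2.ne').comp u ((hasDerivAt_id u).neg.const_add 1)
    simpa [sub_eq_add_neg, Function.comp_def] using this
  have hd : HasDerivAt (fun x : ℝ => (1/2 : ℝ) * (Real.log (1 + x) - Real.log (1 - x)))
      ((1/2 : ℝ) * (1 / (1 + u) - -(1 / (1 - u)))) u := ((hd1.sub hd2).const_mul _)
  have heq : arctanh =ᶠ[nhds u] fun x => (1/2 : ℝ) * (Real.log (1 + x) - Real.log (1 - x)) := by
    filter_upwards [Ioo_mem_nhds h1 h2] with x hx
    unfold arctanh
    rw [Real.log_div (by linarith [hx.1]) (by linarith [hx.2] : (1:ℝ) - x ≠ 0)]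
  have H := hd.congr_of_eventuallyEq heq
  refine H.congr_deriv (Eq.symm ?_)
  have : (1:ℝ) - u ^ 2 = (1 + u) * (1 - u) := by ring
  rw [this]
  field_simp
  ring

lemma continuous_tanh : Continuous Real.tanh :=
  continuous_iff_continuousAt.2 fun x => (hasDerivAt_tanh x).continuousAt

noncomputable def Dfun (d : ℕ) (θ : ℝ) (x : ℝ) : ℝ :=
  d * θ * (1 - Real.tanh x ^ 2) / (1 - θ ^ 2 * Real.tanh x ^ 2)

lemma den_pos {θ : ℝ} (hθ0 : 0 < θ) (hθ1 : θ < 1) (x : ℝ) :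
    0 < 1 - θ ^ 2 * Real.tanh x ^ 2 := by
  have ht : Real.tanh x ^ 2 < 1 := by nlinarith [tanh_lt_one x, neg_one_lt_tanh x]
  have hθ2 : θ ^ 2 ≤ 1 := by nlinarith
  nlinarith [mul_le_mul_of_nonneg_right hθ2 (sq_nonneg (Real.tanh x))]

lemma hasDerivAt_psi (d : ℕ) {θ : ℝ} (hc : ℝ) (hθ0 : 0 < θ) (hθ1 : θ < 1) (x : ℝ) :
    HasDerivAt (fun x => -hc + d * arctanh (θ * Real.tanh x)) (Dfun d θ x) x := by
  have h1 : -1 < θ * Real.tanh x := by nlinarith [neg_one_lt_tanh x, tanh_lt_one x]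
  have h2 : θ * Real.tanh x < 1 := by nlinarith [neg_one_lt_tanh x, tanh_lt_one x]
  have inner : HasDerivAt (fun x => θ * Real.tanh x) (θ * (1 - Real.tanh x ^ 2)) x :=
    (hasDerivAt_tanh x).const_mul θ
  have comp := ((hasDerivAt_arctanh h1 h2).comp x inner).const_mul (d : ℝ) |>.const_add (-hc)
  refine comp.congr_deriv (Eq.symm ?_)
  have hd := den_pos hθ0 hθ1 x
  unfold Dfun
  have e : (1 - (θ * Real.tanh x) ^ 2) = 1 - θ ^ 2 * Real.tanh x ^ 2 := by ring
  rw [e]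
  field_simp

lemma hasDerivAt_D (d : ℕ) {θ : ℝ} (hθ0 : 0 < θ) (hθ1 : θ < 1) (x : ℝ) :
    HasDerivAt (Dfun d θ)
      (-2 * d * θ * (1 - θ ^ 2) * Real.tanh x * (1 - Real.tanh x ^ 2) /
        (1 - θ ^ 2 * Real.tanh x ^ 2) ^ 2) x := by
  have hd := den_pos hθ0 hθ1 x
  have hnum : HasDerivAt (fun x => (d : ℝ) * θ * (1 - Real.tanh x ^ 2))
      ((d : ℝ) * θ * (-(2 * Real.tanh x ^ 1 * (1 - Real.tanh x ^ 2)))) x :=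
    (((hasDerivAt_tanh x).pow 2).neg.const_add 1).const_mul _
  have hden : HasDerivAt (fun x => 1 - θ ^ 2 * Real.tanh x ^ 2)
      (-(θ ^ 2 * (2 * Real.tanh x ^ 1 * (1 - Real.tanh x ^ 2)))) x :=
    (((hasDerivAt_tanh x).pow 2).const_mul (θ ^ 2)).neg.const_add 1
  have h := hnum.div hden hd.ne'
  refine h.congr_deriv (Eq.symm ?_)
  field_simp
  ring

lemma D_abs (d : ℕ) (θ : ℝ) (x : ℝ) : Dfun d θ x = Dfun d θ |x| := by
  rcases abs_cases x with ⟨h, _⟩ | ⟨h, _⟩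
  · rw [h]
  · rw [h]; unfold Dfun; rw [Real.tanh_neg]; ring_nf

lemma D_zero (d : ℕ) (θ : ℝ) : Dfun d θ 0 = d * θ := by
  simp [Dfun, Real.tanh_zero]

lemma D_strictAntiOn (d : ℕ) {θ : ℝ} (hθ0 : 0 < θ) (hθ1 : θ < 1) (hd1 : 1 ≤ d) :
    StrictAntiOn (Dfun d θ) (Set.Ici 0) := by
  intro x hx y hy hxy
  have ht0 : 0 ≤ Real.tanh x := by
    have := tanh_strictMono.le_iff_le.2 (hx : (0:ℝ) ≤ x)
    simpa [Real.tanh_zero] using this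
  have hts : Real.tanh x < Real.tanh y := tanh_strictMono hxy
  have hs1 : Real.tanh y < 1 := tanh_lt_one y
  have hdx := den_pos hθ0 hθ1 x
  have hdy := den_pos hθ0 hθ1 y
  have hdθ : (0:ℝ) < d * θ := by
    have : (1:ℝ) ≤ d := by exact_mod_cast hd1
    nlinarith
  have hsq : Real.tanh x ^ 2 < Real.tanh y ^ 2 := by nlinarith
  have hθ2 : θ ^ 2 < 1 := by nlinarith
  have key : (1 - Real.tanh y ^ 2) * (1 - θ ^ 2 * Real.tanh x ^ 2) <
      (1 - Real.tanh x ^ 2) * (1 - θ ^ 2 * Real.tanh y ^ 2) := by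
    nlinarith [mul_pos (sub_pos.2 hsq) (sub_pos.2 hθ2)]
  unfold Dfun
  rw [div_lt_div_iff₀ hdy hdx]
  nlinarith [mul_lt_mul_of_pos_left key hdθ]

lemma continuous_D (d : ℕ) {θ : ℝ} (hθ0 : 0 < θ) (hθ1 : θ < 1) :
    Continuous (Dfun d θ) := by
  apply Continuous.div
  · exact (continuous_const.mul (continuous_const.sub ((continuous_tanh.pow 2))))
  · exact continuous_const.sub (continuous_const.mul (continuous_tanh.pow 2))
  · exact fun x => (den_pos hθ0 hθ1 x).ne'

lemma one_sub_tanh_le (x : ℝ) : 1 - Real.tanh x ≤ 2 * Real.exp (-(2 * x)) := by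
  have hc := Real.cosh_pos x
  have h1 : 1 - Real.tanh x = Real.exp (-x) / Real.cosh x := by
    rw [Real.tanh_eq_sinh_div_cosh, ← Real.cosh_sub_sinh]
    field_simp
  rw [h1, div_le_iff₀ hc]
  have h2 : Real.exp x / 2 ≤ Real.cosh x := by
    rw [Real.cosh_eq]; nlinarith [Real.exp_pos (-x)]
  have h3 : Real.exp (-(2*x)) * Real.exp x = Real.exp (-x) := by
    rw [← Real.exp_add]; ring_nf
  nlinarith [Real.exp_pos (-(2*x)), Real.exp_pos (-x), Real.exp_pos x]

lemma exists_tangency (d : ℕ) {θ : ℝ} (hθ0 : 0 < θ) (hθ1 : θ < 1) (hd1 : 1 ≤ d)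
    (hdθ : 1 < (d : ℝ) * θ) : ∃ a, 0 < a ∧ Dfun d θ a = 1 := by
  set C : ℝ := 4 * d * θ / (1 - θ ^ 2) with hC
  have hθ2 : (0:ℝ) < 1 - θ ^ 2 := by nlinarith
  have hC4 : 4 < C := by
    rw [hC, lt_div_iff₀ hθ2]; nlinarith
  set x₁ : ℝ := Real.log C + 1 with hx₁
  have hx₁pos : 0 < x₁ := by
    have : (1:ℝ) < Real.log C := by
      have := Real.add_one_le_exp 1
      have h4 : Real.exp 1 < C := by nlinarith [Real.exp_one_lt_d9]
      calc (1:ℝ) = Real.log (Real.exp 1) := by rw [Real.log_exp]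
        _ < Real.log C := Real.log_lt_log (Real.exp_pos 1) h4
    linarith
  have hD1 : Dfun d θ x₁ < 1 := by
    have ht1 : Real.tanh x₁ < 1 := tanh_lt_one x₁
    have ht0 : 0 < Real.tanh x₁ := by
      have := tanh_strictMono hx₁pos
      simpa [Real.tanh_zero] using this
    have hden := den_pos hθ0 hθ1 x₁
    have hbound : 1 - Real.tanh x₁ ^ 2 ≤ 4 * Real.exp (-(2 * x₁)) := by
      nlinarith [one_sub_tanh_le x₁, Real.exp_pos (-(2*x₁))]
    have hexp : Real.exp (-(2 * x₁)) < 1 / C ^ 2 := by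
      have h5 : Real.exp (-(2 * x₁)) = 1 / C ^ 2 * Real.exp (-2) := by
        rw [hx₁]
        rw [show -(2 * (Real.log C + 1)) = -Real.log C + -Real.log C + (-2) by ring,
          Real.exp_add, Real.exp_add, Real.exp_neg, Real.exp_log (by linarith)]
        field_simp
      rw [h5]
      have : Real.exp (-2) < 1 := by
        rw [Real.exp_lt_one_iff]; norm_num
      have hCpos : 0 < C ^ 2 := by positivity
      calc 1 / C ^ 2 * Real.exp (-2) < 1 / C ^ 2 * 1 := by
            apply mul_lt_mul_of_pos_left this; positivity
        _ = 1 / C ^ 2 := by ring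
    have hdθpos : (0:ℝ) < d * θ := by nlinarith
    have h6 : Dfun d θ x₁ ≤ d * θ * (4 * Real.exp (-(2 * x₁))) / (1 - θ ^ 2) := by
      unfold Dfun
      apply div_le_div₀ (by positivity) _ hθ2 _
      · nlinarith
      · have ht2 : Real.tanh x₁ ^ 2 ≤ 1 := by nlinarith
        nlinarith [mul_le_mul_of_nonneg_left ht2 (sq_nonneg θ)]
    have h7 : (d:ℝ) * θ * (4 * Real.exp (-(2 * x₁))) / (1 - θ ^ 2) < 1 := by
      rw [div_lt_one hθ2]
      have h8 : (d:ℝ) * θ * 4 = C * (1 - θ ^ 2) := by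
        rw [hC]; field_simp
      have : (d:ℝ) * θ * (4 * Real.exp (-(2 * x₁))) < C * (1 - θ^2) * (1/C^2) := by
        calc (d:ℝ) * θ * (4 * Real.exp (-(2 * x₁))) = (d:ℝ) * θ * 4 * Real.exp (-(2*x₁)) := by ring
          _ = C * (1 - θ^2) * Real.exp (-(2*x₁)) := by rw [h8]
          _ < C * (1 - θ^2) * (1/C^2) := by
              apply mul_lt_mul_of_pos_left hexp; nlinarith
      have h9 : C * (1 - θ^2) * (1/C^2) ≤ 1 - θ^2 := by
        rw [mul_one_div]
        rw [div_le_iff₀ (by positivity : (0:ℝ) < C^2)]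
        nlinarith
      linarith
    linarith
  have hD0 : (1:ℝ) < Dfun d θ 0 := by rw [D_zero]; exact hdθ
  have hiv := intermediate_value_Icc' hx₁pos.le ((continuous_D d hθ0 hθ1).continuousOn)
  have h1m : (1:ℝ) ∈ Set.Icc (Dfun d θ x₁) (Dfun d θ 0) := ⟨hD1.le, hD0.le⟩
  obtain ⟨a, ha, haD⟩ := hiv h1m
  refine ⟨a, ?_, haD⟩
  rcases eq_or_lt_of_le ha.1 with h | h
  · exfalso; rw [← h] at haD; rw [← haD] at hD0; exact lt_irrefl _ hD0
  · exact h

set_option maxHeartbeats 2000000 in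
/-- at the negative critical field (exactly two fixed points `b⁻ < b⁺`),
`b⁺` is a saddle-node fixed point: `ψ'(b⁺) = 1`, `ψ''(b⁺) < 0`, and `ψ'(b⁻) < 1`. -/
theorem saddle_node_at_critical_field
    (d : ℕ) (hd : 2 ≤ d) (θ hc : ℝ) (hθ : θ ∈ Set.Ioo (0 : ℝ) 1)
    (hdθ : 1 < (d : ℝ) * θ) (hhc : 0 < hc)
    (ψ : ℝ → ℝ) (hψ : ψ = fun x => -hc + d * arctanh (θ * Real.tanh x))
    (bm bp : ℝ) (hlt : bm < bp)
    (hfix : ∀ x, ψ x = x ↔ x = bm ∨ x = bp) :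
    deriv ψ bp = 1 ∧ deriv (deriv ψ) bp < 0 ∧ deriv ψ bm < 1 := by
  obtain ⟨hθ0, hθ1⟩ := hθ
  have hd1 : 1 ≤ d := le_trans (by norm_num) hd
  have hdR : (1:ℝ) ≤ d := by exact_mod_cast hd1
  have hψ' : ∀ x, HasDerivAt ψ (Dfun d θ x) x := by
    rw [hψ]; exact fun x => hasDerivAt_psi d hc hθ0 hθ1 x
  have hDψ : deriv ψ = Dfun d θ := funext fun x => (hψ' x).deriv
  set g : ℝ → ℝ := fun x => ψ x - x with hgdef
  have hg : ∀ x, HasDerivAt g (Dfun d θ x - 1) x := fun x => (hψ' x).sub (hasDerivAt_id x)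
  have hgc : Continuous g :=
    continuous_iff_continuousAt.2 fun x => (hg x).continuousAt
  have hzero : ∀ x, g x = 0 ↔ x = bm ∨ x = bp := by
    intro x
    rw [← hfix x, hgdef]
    simp [sub_eq_zero]
  obtain ⟨a, ha0, haD⟩ := exists_tangency d hθ0 hθ1 hd1 hdθ
  have D_gt : ∀ x, |x| < a → 1 < Dfun d θ x := by
    intro x hx
    rw [D_abs]
    have := D_strictAntiOn d hθ0 hθ1 hd1 (abs_nonneg x) ha0.le hx
    rwa [haD] at this
  have D_lt : ∀ x, a < |x| → Dfun d θ x < 1 := by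
    intro x hx
    rw [D_abs]
    have := D_strictAntiOn d hθ0 hθ1 hd1 ha0.le (abs_nonneg x) hx
    rwa [haD] at this
  have gmono : StrictMonoOn g (Set.Icc (-a) a) := by
    apply strictMonoOn_of_deriv_pos (convex_Icc _ _) hgc.continuousOn
    rw [interior_Icc]
    intro x hx
    rw [(hg x).deriv]
    have : |x| < a := abs_lt.2 ⟨hx.1, hx.2⟩
    linarith [D_gt x this]
  have ganti1 : StrictAntiOn g (Set.Ici a) := by
    apply strictAntiOn_of_deriv_neg (convex_Ici _) hgc.continuousOn
    rw [interior_Ici]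
    intro x hx
    rw [(hg x).deriv]
    have : a < |x| := lt_of_lt_of_le hx (le_abs_self x)
    linarith [D_lt x this]
  have ganti2 : StrictAntiOn g (Set.Iic (-a)) := by
    apply strictAntiOn_of_deriv_neg (convex_Iic _) hgc.continuousOn
    rw [interior_Iic]
    intro x hx
    rw [(hg x).deriv]
    have hx' : x < -a := hx
    have : a < |x| := by
      have h1 : a < -x := by linarith
      exact lt_of_lt_of_le h1 (neg_le_abs x)
    linarith [D_lt x this]
  have hsym : g (-a) + g a = -2 * hc := by
    rw [hgdef, hψ]
    simp only
    rw [Real.tanh_neg, show θ * -Real.tanh a = -(θ * Real.tanh a) by ring, arctanh_neg]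
    ring
  have hgbm : g bm = 0 := (hzero bm).2 (Or.inl rfl)
  have hgbp : g bp = 0 := (hzero bp).2 (Or.inr rfl)
  rcases lt_trichotomy (g a) 0 with hga | hga | hga
  · -- g a < 0 : impossible
    exfalso
    have hblt : ∀ z, g z = 0 → z < -a := by
      intro z hz
      by_contra hzc
      push_neg at hzc
      rcases le_or_gt z a with h1 | h1
      · rcases eq_or_lt_of_le h1 with rfl | h2
        · linarith
        · have := gmono ⟨hzc, h1⟩ ⟨by linarith, le_refl a⟩ h2
          linarith
      · have := ganti1 (Set.self_mem_Ici) h1.le h1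
        linarith
    have h1 := hblt bm hgbm
    have h2 := hblt bp hgbp
    have := ganti2 (Set.mem_Iic.2 h1.le) (Set.mem_Iic.2 h2.le) hlt
    linarith
  · -- g a = 0 : the main case
    have hfa : ψ a = a := by
      have : ψ a - a = 0 := hga
      linarith
    rcases (hfix a).1 hfa with hab | hab
    · exfalso
      have := ganti1 Set.self_mem_Ici (Set.mem_Ici.2 (hab.le.trans hlt.le))
        (lt_of_eq_of_lt hab hlt)
      rw [hgbp] at this
      linarith
    · -- a = bp
      have hbma : bm < a := by rw [hab]; exact hlt
      have hbm : bm < -a := by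
        by_contra hc2
        push_neg at hc2
        have := gmono ⟨hc2, hbma.le⟩ ⟨by linarith, le_refl a⟩ hbma
        rw [hgbm] at this
        linarith
      refine ⟨?_, ?_, ?_⟩
      · rw [hDψ, ← hab]; exact haD
      · rw [hDψ, (hasDerivAt_D d hθ0 hθ1 bp).deriv]
        have hbp0 : 0 < bp := by rw [← hab]; exact ha0
        have ht0 : 0 < Real.tanh bp := by
          have := tanh_strictMono hbp0
          simpa [Real.tanh_zero] using this
        have ht1 : Real.tanh bp < 1 := tanh_lt_one bp
        have hden := den_pos hθ0 hθ1 bp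
        apply div_neg_of_neg_of_pos
        · have h1 : (0:ℝ) < 1 - θ ^ 2 := by nlinarith
          have h2 : (0:ℝ) < 1 - Real.tanh bp ^ 2 := by nlinarith
          have h3 : (0:ℝ) < (d:ℝ) * θ := by nlinarith
          nlinarith [mul_pos (mul_pos (mul_pos h3 h1) ht0) h2]
        · positivity
      · rw [hDψ]
        apply D_lt
        have h1 : a < -bm := by linarith
        exact lt_of_lt_of_le h1 (neg_le_abs bm)
  · -- g a > 0 : impossible (three fixed points)
    exfalso
    set M : ℝ := d * arctanh θ with hM
    have hmem : ∀ x, θ * Real.tanh x ∈ Set.Ioo (-1 : ℝ) 1 := by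
      intro x
      constructor
      · nlinarith [neg_one_lt_tanh x, tanh_lt_one x]
      · nlinarith [neg_one_lt_tanh x, tanh_lt_one x]
    have hθmem : θ ∈ Set.Ioo (-1 : ℝ) 1 := ⟨by linarith, hθ1⟩
    have hθmem' : -θ ∈ Set.Ioo (-1 : ℝ) 1 := ⟨by linarith, by linarith⟩
    have hφlt : ∀ x, (d : ℝ) * arctanh (θ * Real.tanh x) < M := by
      intro x
      have h1 : θ * Real.tanh x < θ := by nlinarith [tanh_lt_one x]
      have := arctanh_strictMonoOn (hmem x) hθmem h1
      rw [hM]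
      have hd0 : (0:ℝ) < d := by linarith
      exact mul_lt_mul_of_pos_left this hd0
    have hφgt : ∀ x, -M < (d : ℝ) * arctanh (θ * Real.tanh x) := by
      intro x
      have h1 : -θ < θ * Real.tanh x := by nlinarith [neg_one_lt_tanh x]
      have := arctanh_strictMonoOn hθmem' (hmem x) h1
      rw [show arctanh (-θ) = -arctanh θ from arctanh_neg θ] at this
      rw [hM]
      have hd0 : (0:ℝ) < d := by linarith
      have h2 := mul_lt_mul_of_pos_left this hd0
      rw [mul_neg] at h2
      exact h2
    have hgval : ∀ x, g x = -hc + d * arctanh (θ * Real.tanh x) - x := by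
      intro x; rw [hgdef, hψ]
    set X : ℝ := max a (hc + M) + 1 with hX
    have hXa : a < X := by
      have := le_max_left a (hc + M); rw [hX]; linarith
    have hgX : g X < 0 := by
      rw [hgval]
      have h1 := hφlt X
      have h2 : hc + M + 1 ≤ X := by
        have := le_max_right a (hc + M); rw [hX]; linarith
      linarith
    set Y : ℝ := min (-a) (-(hc + M)) - 1 with hY
    have hYa : Y < -a := by
      have := min_le_left (-a) (-(hc + M)); rw [hY]; linarith
    have hgY : 0 < g Y := by
      rw [hgval]
      have h1 := hφgt Y
      have h2 : Y ≤ -(hc + M) - 1 := by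
        have := min_le_right (-a) (-(hc + M)); rw [hY]; linarith
      linarith
    have hgna : g (-a) < 0 := by linarith
    obtain ⟨z₁, hz₁m, hz₁⟩ := intermediate_value_Ioo' hYa.le hgc.continuousOn
      (Set.mem_Ioo.2 ⟨hgna, hgY⟩)
    obtain ⟨z₂, hz₂m, hz₂⟩ := intermediate_value_Ioo (by linarith : -a ≤ a) hgc.continuousOn
      (Set.mem_Ioo.2 ⟨hgna, hga⟩)
    obtain ⟨z₃, hz₃m, hz₃⟩ := intermediate_value_Ioo' hXa.le hgc.continuousOn
      (Set.mem_Ioo.2 ⟨hgX, hga⟩)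
    have h12 : z₁ < z₂ := lt_trans hz₁m.2 hz₂m.1
    have h23 : z₂ < z₃ := lt_trans hz₂m.2 hz₃m.1
    rcases (hzero z₁).1 hz₁ with e1 | e1 <;>
      rcases (hzero z₂).1 hz₂ with e2 | e2 <;>
      rcases (hzero z₃).1 hz₃ with e3 | e3 <;>
      rw [e1] at h12 <;> rw [e2] at h12 h23 <;> rw [e3] at h23 <;> linarith
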